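/- Let 1 ≤ p₁ ≤ p₂ < ∞, let φ₁ ∈ G_{p₁} and φ₂ ∈ G_{p₂}. Suppose there exists C' > 0 such that ‖x‖_{wℓ^{p₁}_{φ₁}} ≤ C' ‖x‖_{wℓ^{p₂}_{φ₂}} for every x ∈ wℓ^{p₂}_{φ₂}. Then there exists C > 0 such that φ₂(2N+1) ≤ C φ₁(2N+1) for every N ∈ ℕ. -/

import Mathlib

open scoped ENNReal NNReal BigOperators

/-- The discrete "ball" `S_{m,N} = {m-N, …, m+N}` as a finite set of integers. -/
noncomputable def S (m : ℤ) (N : ℕ) : Finset ℤ := Finset.Icc (m - N) (m + N)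

open Classical in
/-- The cardinality of `{k ∈ S_{m,N} : |x_k| > γ}`. -/
noncomputable def weakCard (x : ℤ → ℂ) (m : ℤ) (N : ℕ) (γ : ℝ≥0) : ℕ :=
  ((S m N).filter (fun k => γ < ‖x k‖₊)).card

/-- The generalized weak type discrete Morrey norm `‖x‖_{wℓ^p_φ}`. -/
noncomputable def wgMorreyNorm (p : ℝ) (φ : ℕ → ℝ) (x : ℤ → ℂ) : ℝ≥0∞ :=
  ⨆ (m : ℤ) (N : ℕ) (γ : ℝ≥0) (_ : 0 < γ),
    (ENNReal.ofReal (φ (2 * N + 1)))⁻¹ * (γ : ℝ≥0∞) *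
      ((weakCard x m N γ : ℝ≥0∞) / (2 * (N : ℝ≥0∞) + 1)) ^ (1 / p)

lemma cardS (m : ℤ) (N : ℕ) : (S m N).card = 2 * N + 1 := by
  simp only [S, Int.card_Icc]; omega

lemma term_eq (p : ℝ) (hp : 0 ≤ p) (φ : ℕ → ℝ) (x : ℤ → ℂ) (m : ℤ) (N : ℕ) (γ : ℝ≥0)
    (hφ : 0 < φ (2 * N + 1)) :
    (ENNReal.ofReal (φ (2 * N + 1)))⁻¹ * (γ : ℝ≥0∞) *
      ((weakCard x m N γ : ℝ≥0∞) / (2 * (N : ℝ≥0∞) + 1)) ^ (1 / p)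
    = ENNReal.ofReal ((φ (2 * N + 1))⁻¹ * (γ : ℝ) *
        ((weakCard x m N γ : ℝ) / (2 * (N : ℝ) + 1)) ^ (1 / p)) := by
  have h2N : (0:ℝ) < 2 * (N : ℝ) + 1 := by positivity
  have h1 : (2 * (N : ℝ≥0∞) + 1) = ENNReal.ofReal (2 * (N : ℝ) + 1) := by
    rw [ENNReal.ofReal_add (by positivity) (by norm_num), ENNReal.ofReal_mul (by norm_num)]
    simp
  have h2 : ((weakCard x m N γ : ℝ≥0∞)) = ENNReal.ofReal (weakCard x m N γ : ℝ) := by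
    simp
  rw [h1, h2, ← ENNReal.ofReal_div_of_pos h2N,
    ENNReal.ofReal_rpow_of_nonneg (by positivity) (div_nonneg one_pos.le hp),
    ← ENNReal.ofReal_inv_of_pos hφ, ← ENNReal.ofReal_coe_nnreal,
    ← ENNReal.ofReal_mul (inv_nonneg.mpr hφ.le),
    ← ENNReal.ofReal_mul (mul_nonneg (inv_nonneg.mpr hφ.le) γ.coe_nonneg)]

theorem stmt18 (p₁ p₂ : ℝ) (hp₁ : 1 ≤ p₁) (hp : p₁ ≤ p₂)
    (φ₁ φ₂ : ℕ → ℝ)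
    (hφ₁pos : ∀ N : ℕ, 0 < φ₁ (2 * N + 1)) (hφ₂pos : ∀ N : ℕ, 0 < φ₂ (2 * N + 1))
    (hdec₁ : ∃ C : ℝ, 0 < C ∧ ∀ M N : ℕ, M ≤ N → C * φ₁ (2 * N + 1) ≤ φ₁ (2 * M + 1))
    (hinc₁ : ∃ C : ℝ, 0 < C ∧ ∀ M N : ℕ, M ≤ N →
      (2 * (M : ℝ) + 1) ^ (1 / p₁) * φ₁ (2 * M + 1) ≤
        C * ((2 * (N : ℝ) + 1) ^ (1 / p₁) * φ₁ (2 * N + 1)))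
    (hdec₂ : ∃ C : ℝ, 0 < C ∧ ∀ M N : ℕ, M ≤ N → C * φ₂ (2 * N + 1) ≤ φ₂ (2 * M + 1))
    (hinc₂ : ∃ C : ℝ, 0 < C ∧ ∀ M N : ℕ, M ≤ N →
      (2 * (M : ℝ) + 1) ^ (1 / p₂) * φ₂ (2 * M + 1) ≤
        C * ((2 * (N : ℝ) + 1) ^ (1 / p₂) * φ₂ (2 * N + 1)))
    (C' : ℝ) (hC' : 0 < C')
    (hnorm : ∀ x : ℤ → ℂ, wgMorreyNorm p₂ φ₂ x < ⊤ →
      wgMorreyNorm p₁ φ₁ x ≤ ENNReal.ofReal C' * wgMorreyNorm p₂ φ₂ x) :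
    ∃ C : ℝ, 0 < C ∧ ∀ N : ℕ, φ₂ (2 * N + 1) ≤ C * φ₁ (2 * N + 1) := by
  classical
  obtain ⟨Cd, hCd, hdec⟩ := hdec₂
  obtain ⟨Ci, hCi, hinc⟩ := hinc₂
  have hp₁' : (0:ℝ) < p₁ := lt_of_lt_of_le one_pos hp₁
  have hp₂' : (0:ℝ) < p₂ := lt_of_lt_of_le hp₁' hp
  set K : ℝ := max Ci Cd⁻¹ with hK
  have hKpos : 0 < K := lt_max_of_lt_left hCi
  refine ⟨2 * C' * K, by positivity, fun N₀ => ?_⟩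
  set x : ℤ → ℂ := fun k => if k ∈ S 0 N₀ then 1 else 0 with hx
  have hxn : ∀ k, ‖x k‖₊ = if k ∈ S 0 N₀ then 1 else 0 := by
    intro k; by_cases h : k ∈ S 0 N₀ <;> simp [hx, h]
  have hwc_le1 : ∀ (m : ℤ) (N : ℕ) (γ : ℝ≥0), weakCard x m N γ ≤ 2 * N + 1 := fun m N γ =>
    (Finset.card_filter_le _ _).trans (cardS m N).le
  have hwc_le2 : ∀ (m : ℤ) (N : ℕ) (γ : ℝ≥0), weakCard x m N γ ≤ 2 * N₀ + 1 := by
    intro m N γ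
    refine le_trans (Finset.card_le_card ?_) (cardS 0 N₀).le
    intro k hk
    simp only [Finset.mem_filter] at hk
    by_contra h
    have h2 := hk.2
    rw [hxn k, if_neg h] at h2
    exact absurd h2 (by simp)
  have hwc_zero : ∀ (m : ℤ) (N : ℕ) (γ : ℝ≥0), 1 ≤ γ → weakCard x m N γ = 0 := by
    intro m N γ hγ
    rw [weakCard, Finset.card_eq_zero, Finset.filter_eq_empty_iff]
    intro k _
    rw [hxn k]
    by_cases h : k ∈ S 0 N₀
    · rw [if_pos h]; exact not_lt.mpr hγ
    · rw [if_neg h]; exact not_lt.mpr (zero_le)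
  have hwc_full : weakCard x 0 N₀ (1/2) = 2 * N₀ + 1 := by
    rw [weakCard, Finset.filter_true_of_mem, cardS]
    intro k hk
    rw [hxn k, if_pos hk]
    exact half_lt_self one_pos
  -- real bound for the p₂-terms
  have hreal : ∀ (m : ℤ) (N : ℕ) (γ : ℝ≥0), (γ:ℝ≥0) < 1 →
      (φ₂ (2*N+1))⁻¹ * (γ : ℝ) * ((weakCard x m N γ : ℝ) / (2*(N:ℝ)+1)) ^ (1/p₂)
        ≤ K / φ₂ (2*N₀+1) := by
    intro m N γ hγ
    have hγ1 : (γ:ℝ) ≤ 1 := le_of_lt (by exact_mod_cast hγ)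
    have hγ0 : (0:ℝ) ≤ γ := γ.coe_nonneg
    have h2N : (0:ℝ) < 2*(N:ℝ)+1 := by positivity
    have hφN := hφ₂pos N
    have hφN₀ := hφ₂pos N₀
    have hrnn : (0:ℝ) ≤ (weakCard x m N γ : ℝ) / (2*(N:ℝ)+1) := by positivity
    rcases le_total N N₀ with hNN | hNN
    · -- small N : use almost decreasing
      have hr1 : (weakCard x m N γ : ℝ) / (2*(N:ℝ)+1) ≤ 1 := by
        rw [div_le_one h2N]
        exact_mod_cast hwc_le1 m N γ
      have hpow : ((weakCard x m N γ : ℝ) / (2*(N:ℝ)+1)) ^ (1/p₂) ≤ 1 :=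
        Real.rpow_le_one hrnn hr1 (by positivity)
      have step : (φ₂ (2*N+1))⁻¹ * (γ : ℝ) * ((weakCard x m N γ : ℝ) / (2*(N:ℝ)+1)) ^ (1/p₂)
          ≤ (φ₂ (2*N+1))⁻¹ := by
        calc (φ₂ (2*N+1))⁻¹ * (γ : ℝ) * (_ ^ (1/p₂)) ≤ (φ₂ (2*N+1))⁻¹ * 1 * 1 := by
              apply mul_le_mul (mul_le_mul le_rfl hγ1 hγ0 (by positivity)) hpow
                (by positivity) (by positivity)
          _ = (φ₂ (2*N+1))⁻¹ := by ring
      refine step.trans ?_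
      have hmono := hdec N N₀ hNN
      have h1 : (φ₂ (2*N+1))⁻¹ ≤ (Cd * φ₂ (2*N₀+1))⁻¹ := by
        apply inv_anti₀ (by positivity) hmono
      rw [mul_inv] at h1
      refine h1.trans ?_
      rw [div_eq_mul_inv K]
      exact mul_le_mul_of_nonneg_right (le_max_right _ _) (inv_nonneg.mpr hφN₀.le)
    · -- large N : use almost increasing
      have hr2 : (weakCard x m N γ : ℝ) / (2*(N:ℝ)+1) ≤ (2*(N₀:ℝ)+1) / (2*(N:ℝ)+1) := by
        gcongr
        exact_mod_cast hwc_le2 m N γ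
      have hpow : ((weakCard x m N γ : ℝ) / (2*(N:ℝ)+1)) ^ (1/p₂)
          ≤ ((2*(N₀:ℝ)+1) / (2*(N:ℝ)+1)) ^ (1/p₂) :=
        Real.rpow_le_rpow hrnn hr2 (by positivity)
      have step : (φ₂ (2*N+1))⁻¹ * (γ : ℝ) * ((weakCard x m N γ : ℝ) / (2*(N:ℝ)+1)) ^ (1/p₂)
          ≤ (φ₂ (2*N+1))⁻¹ * (((2*(N₀:ℝ)+1) / (2*(N:ℝ)+1)) ^ (1/p₂)) := by
        calc (φ₂ (2*N+1))⁻¹ * (γ : ℝ) * (_ ^ (1/p₂))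
            ≤ (φ₂ (2*N+1))⁻¹ * 1 * (((2*(N₀:ℝ)+1) / (2*(N:ℝ)+1)) ^ (1/p₂)) := by
              apply mul_le_mul (mul_le_mul le_rfl hγ1 hγ0 (by positivity)) hpow
                (by positivity) (by positivity)
          _ = _ := by ring
      refine step.trans ?_
      have key := hinc N₀ N hNN
      have hdivpow : ((2*(N₀:ℝ)+1) / (2*(N:ℝ)+1)) ^ (1/p₂)
          = (2*(N₀:ℝ)+1) ^ (1/p₂) / (2*(N:ℝ)+1) ^ (1/p₂) :=
        Real.div_rpow (by positivity) (by positivity) _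
      rw [hdivpow]
      have hcpos : (0:ℝ) < (2*(N:ℝ)+1) ^ (1/p₂) := by positivity
      have hE : (φ₂ (2*N+1))⁻¹ * ((2*(N₀:ℝ)+1) ^ (1/p₂) / (2*(N:ℝ)+1) ^ (1/p₂))
          = (2*(N₀:ℝ)+1) ^ (1/p₂) / (φ₂ (2*N+1) * (2*(N:ℝ)+1) ^ (1/p₂)) := by
        field_simp
      rw [hE]
      have hCiK : Ci ≤ K := le_max_left _ _
      rw [div_le_div_iff₀ (mul_pos hφN hcpos) hφN₀]
      nlinarith [mul_pos hφN hcpos]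
  -- ENNReal upper bound
  have hup : wgMorreyNorm p₂ φ₂ x ≤ ENNReal.ofReal (K / φ₂ (2*N₀+1)) := by
    rw [wgMorreyNorm]
    refine iSup_le fun m => iSup_le fun N => iSup_le fun γ => iSup_le fun _ => ?_
    rw [term_eq p₂ hp₂'.le φ₂ x m N γ (hφ₂pos N)]
    apply ENNReal.ofReal_le_ofReal
    rcases lt_or_ge γ 1 with hγ | hγ
    · exact hreal m N γ hγ
    · rw [hwc_zero m N γ hγ]
      have h0 : ((0:ℕ):ℝ) / (2*(N:ℝ)+1) = 0 := by simp
      rw [h0, Real.zero_rpow (by positivity : (1/p₂) ≠ 0), mul_zero]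
      exact div_nonneg hKpos.le (hφ₂pos N₀).le
  -- ENNReal lower bound
  have hlow : ENNReal.ofReal ((φ₁ (2*N₀+1))⁻¹ * (1/2)) ≤ wgMorreyNorm p₁ φ₁ x := by
    rw [wgMorreyNorm]
    refine le_iSup_of_le (0:ℤ) (le_iSup_of_le N₀ (le_iSup_of_le (1/2 : ℝ≥0)
      (le_iSup_of_le (by norm_num) ?_)))
    rw [term_eq p₁ hp₁'.le φ₁ x 0 N₀ (1/2) (hφ₁pos N₀)]
    apply ENNReal.ofReal_le_ofReal
    rw [hwc_full]
    have h2N : (0:ℝ) < 2*(N₀:ℝ)+1 := by positivity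
    have : (((2*N₀+1 : ℕ)):ℝ) / (2*(N₀:ℝ)+1) = 1 := by
      push_cast; rw [div_self (ne_of_gt h2N)]
    rw [this, Real.one_rpow]
    push_cast
    norm_num
  -- combine
  have hfin : wgMorreyNorm p₂ φ₂ x < ⊤ := lt_of_le_of_lt hup ENNReal.ofReal_lt_top
  have h1 : ENNReal.ofReal ((φ₁ (2*N₀+1))⁻¹ * (1/2))
      ≤ ENNReal.ofReal (C' * (K / φ₂ (2*N₀+1))) := by
    refine (hlow.trans (hnorm x hfin)).trans ?_
    rw [ENNReal.ofReal_mul hC'.le]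
    exact mul_le_mul_right hup _
  have hφ1 := hφ₁pos N₀
  have hφ2 := hφ₂pos N₀
  have h2 : (φ₁ (2*N₀+1))⁻¹ * (1/2) ≤ C' * (K / φ₂ (2*N₀+1)) :=
    (ENNReal.ofReal_le_ofReal_iff (by positivity)).mp h1
  rw [inv_mul_eq_div, mul_div_assoc'] at h2
  rw [div_le_div_iff₀ hφ1 hφ2] at h2
  nlinarith
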